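/- Outer description of the ordered even parity polytope: For r in N^k, the convex hull of all tuples (x^(1),...,x^(k)) of ordered binary vectors x^(i) in {0,1}^{r_i} whose total number of ones is even equals the set of points (x^(1),...,x^(k)) with each x^(i) in P_ord^{r_i} (i.e., 1 >= x^(i)_1 >= ... >= x^(i)_{r_i} >= 0) satisfying, for every F subset of [k] with |F| odd, the inequality sum_{i in [k]\F} f(x^(i)) + sum_{i in F} (1 - f(x^(i))) >= 1. -/

import Mathlib

def altSum {m : ℕ} (y : Fin m → ℝ) : ℝ := ∑ j : Fin m, (-1 : ℝ) ^ (j : ℕ) * y j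

namespace Stmt7

open Finset

variable {m : ℕ}

/-- boundary-extended values: gf y 0 = 1, gf y (s+1) = y s (or 0 past the end). -/
def gf (y : Fin m → ℝ) : ℕ → ℝ
  | 0 => 1
  | s + 1 => if h : s < m then y ⟨s, h⟩ else 0

/-- staircase coefficients -/
def lam (y : Fin m → ℝ) (s : ℕ) : ℝ := gf y s - gf y (s + 1)

/-- reconstruction from coefficients -/
def Yof (m : ℕ) (μ : ℕ → ℝ) : Fin m → ℝ := fun j => ∑ s ∈ Finset.Ico ((j : ℕ) + 1) (m + 1), μ s

/-- bounds and monotone predicate -/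
def OK (y : Fin m → ℝ) : Prop :=
  (∀ j, 0 ≤ y j ∧ y j ≤ 1) ∧ ∀ j j' : Fin m, j ≤ j' → y j' ≤ y j

lemma gf_top (y : Fin m → ℝ) : gf y (m + 1) = 0 := by simp [gf]

lemma sum_lam (y : Fin m → ℝ) : ∑ s ∈ range (m + 1), lam y s = 1 := by
  have := Finset.sum_range_sub' (gf y) (m + 1)
  simpa [lam, gf_top, gf] using this

lemma Yof_lam (y : Fin m → ℝ) (j : Fin m) : Yof m (lam y) j = y j := by
  have hj : (j : ℕ) < m := j.2
  have key : ∑ s ∈ Finset.Ico ((j : ℕ) + 1) (m + 1), lam y s = gf y ((j : ℕ) + 1) - gf y (m + 1) := by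
    rw [Finset.sum_Ico_eq_sum_range]
    have h1 : m + 1 - ((j : ℕ) + 1) = m - j := by omega
    rw [h1]
    have h2 : (j : ℕ) + 1 + (m - (j : ℕ)) = m + 1 := by omega
    calc ∑ i ∈ range (m - (j : ℕ)), lam y ((j : ℕ) + 1 + i)
        = ∑ i ∈ range (m - (j : ℕ)),
            (gf y ((j : ℕ) + 1 + i) - gf y ((j : ℕ) + 1 + (i + 1))) := by
          refine Finset.sum_congr rfl fun i _ => ?_
          simp [lam, Nat.add_assoc]
      _ = gf y ((j : ℕ) + 1 + 0) - gf y ((j : ℕ) + 1 + (m - (j : ℕ))) :=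
          Finset.sum_range_sub' _ _
      _ = gf y ((j : ℕ) + 1) - gf y (m + 1) := by rw [h2, Nat.add_zero]
  rw [Yof, key, gf_top, sub_zero]
  simp [gf, hj]

lemma lam_nonneg {y : Fin m → ℝ} (h : OK y) (s : ℕ) : 0 ≤ lam y s := by
  obtain ⟨hb, hm⟩ := h
  rcases s with _ | s
  · by_cases h0 : 0 < m
    · simp only [lam, gf, h0, dif_pos, sub_nonneg]
      exact (hb _).2
    · simp [lam, gf, h0]
  · by_cases h1 : s + 1 < m
    · have h0 : s < m := by omega
      simp only [lam, gf, h1, h0, dif_pos, sub_nonneg]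
      exact hm ⟨s, h0⟩ ⟨s + 1, h1⟩ (by simp)
    · by_cases h0 : s < m
      · simp only [lam, gf, h1, h0, dif_pos, dif_neg, not_false_iff, sub_zero]
        exact (hb _).1
      · simp [lam, gf, h0, h1]

lemma altSum_Yof (μ : ℕ → ℝ) :
    altSum (Yof m μ) = ∑ s ∈ range (m + 1), if Odd s then μ s else 0 := by
  have hIco : ∀ a : ℕ, Finset.Ico a (m + 1) = (range (m + 1)).filter (fun s => a ≤ s) := by
    intro a; ext s
    simp only [Finset.mem_Ico, Finset.mem_range, Finset.mem_filter]
    omega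
  have step1 : ∀ j : Fin m, (-1 : ℝ) ^ (j : ℕ) * Yof m μ j
      = ∑ s ∈ range (m + 1), if (j : ℕ) + 1 ≤ s then (-1 : ℝ) ^ (j : ℕ) * μ s else 0 := by
    intro j
    rw [Yof, Finset.mul_sum, hIco, Finset.sum_filter]
  unfold altSum
  simp only [step1]
  rw [Finset.sum_comm]
  refine Finset.sum_congr rfl fun s hs => ?_
  have hsm : s ≤ m := by simpa [Nat.lt_succ_iff] using Finset.mem_range.mp hs
  have h2 : ∑ j : Fin m, (if (j : ℕ) + 1 ≤ s then (-1 : ℝ) ^ (j : ℕ) * μ s else 0)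
      = ∑ j ∈ range s, (-1 : ℝ) ^ j * μ s := by
    rw [Fin.sum_univ_eq_sum_range (fun j => if j + 1 ≤ s then (-1 : ℝ) ^ j * μ s else 0) m]
    rw [← Finset.sum_filter]
    congr 1
    ext t
    simp only [Finset.mem_filter, Finset.mem_range]
    omega
  rw [h2, ← Finset.sum_mul, neg_one_geom_sum]
  rcases Nat.even_or_odd s with he | ho
  · simp [he, Nat.not_odd_iff_even.2 he]
  · simp [ho, Nat.not_even_iff_odd.2 ho]


lemma OK_Yof {μ : ℕ → ℝ} (hμ : ∀ s, 0 ≤ μ s) (hsum : ∑ s ∈ range (m + 1), μ s = 1) :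
    OK (Yof m μ) := by
  constructor
  · intro j
    constructor
    · exact Finset.sum_nonneg fun s _ => hμ s
    · rw [← hsum]
      refine Finset.sum_le_sum_of_subset_of_nonneg ?_ fun s hs _ => hμ s
      intro s hs
      simp only [Finset.mem_Ico] at hs
      simp only [Finset.mem_range]
      omega
  · intro j j' hjj'
    refine Finset.sum_le_sum_of_subset_of_nonneg ?_ fun s hs _ => hμ s
    intro s hs
    simp only [Finset.mem_Ico] at hs ⊢
    have : (j : ℕ) ≤ (j' : ℕ) := hjj'
    omega

lemma altSum_eq (y : Fin m → ℝ) :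
    altSum y = ∑ s ∈ range (m + 1), if Odd s then lam y s else 0 := by
  have hy : y = Yof m (lam y) := funext fun j => (Yof_lam y j).symm
  conv_lhs => rw [hy]
  exact altSum_Yof _

lemma altSum_nonneg {y : Fin m → ℝ} (h : OK y) : 0 ≤ altSum y := by
  rw [altSum_eq]
  refine Finset.sum_nonneg fun s _ => ?_
  by_cases hs : Odd s <;> simp [hs, lam_nonneg h]

lemma altSum_le_one {y : Fin m → ℝ} (h : OK y) : altSum y ≤ 1 := by
  rw [altSum_eq, ← sum_lam y]
  refine Finset.sum_le_sum fun s _ => ?_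
  by_cases hs : Odd s <;> simp [hs, lam_nonneg h]

lemma one_sub_altSum (y : Fin m → ℝ) :
    1 - altSum y = ∑ s ∈ range (m + 1), if Odd s then 0 else lam y s := by
  rw [altSum_eq, ← sum_lam y, ← Finset.sum_sub_distrib]
  refine Finset.sum_congr rfl fun s _ => ?_
  by_cases hs : Odd s <;> simp [hs]

/-- The main perturbation engine: shifting mass between two staircase atoms. -/
lemma shift_ok {y : Fin m → ℝ} (h : OK y) {a b : ℕ} (ha : a ≤ m) (hb : b ≤ m)
    (hab : a ≠ b) (hpa : 0 < lam y a) (hpb : 0 < lam y b) :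
    ∃ v : Fin m → ℝ, v ≠ 0 ∧ ∃ ε0 : ℝ, 0 < ε0 ∧ ∀ δ : ℝ, |δ| ≤ ε0 →
      OK (fun j => y j + δ * v j) ∧
      altSum (fun j => y j + δ * v j)
        = altSum y + δ * ((if Odd b then 1 else 0) - (if Odd a then 1 else 0)) := by
  classical
  set ν : ℕ → ℝ := fun s => (if s = b then (1:ℝ) else 0) - (if s = a then 1 else 0) with hν
  set v : Fin m → ℝ := Yof m ν with hv
  have hva : ∀ j : Fin m, v j = (if (j : ℕ) < b then (1:ℝ) else 0) - (if (j : ℕ) < a then 1 else 0) := by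
    intro j
    simp only [hv, Yof, hν, Finset.sum_sub_distrib]
    rw [Finset.sum_ite_eq' (Finset.Ico ((j : ℕ) + 1) (m + 1)) b fun _ => (1:ℝ),
      Finset.sum_ite_eq' (Finset.Ico ((j : ℕ) + 1) (m + 1)) a fun _ => (1:ℝ)]
    have hjb : b ∈ Finset.Ico ((j : ℕ) + 1) (m + 1) ↔ (j : ℕ) < b := by
      simp only [Finset.mem_Ico]; omega
    have hja : a ∈ Finset.Ico ((j : ℕ) + 1) (m + 1) ↔ (j : ℕ) < a := by
      simp only [Finset.mem_Ico]; omega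
    by_cases h1 : (j : ℕ) < b <;> by_cases h2 : (j : ℕ) < a <;>
      simp [h1, h2, hjb, hja]
  refine ⟨v, ?_, min (lam y a) (lam y b), lt_min hpa hpb, ?_⟩
  · -- v ≠ 0
    intro hcon
    have hmax : max a b - 1 < m := by omega
    have := congrFun hcon ⟨max a b - 1, hmax⟩
    rw [hva] at this
    simp only [Pi.zero_apply] at this
    rcases Nat.lt_or_ge a b with hlt | hge
    · have h1 : (max a b - 1 : ℕ) < b := by omega
      have h2 : ¬ ((max a b - 1 : ℕ) < a) := by omega
      rw [if_pos h1, if_neg h2] at this; norm_num at this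
    · have hlt : b < a := by omega
      have h1 : ¬ ((max a b - 1 : ℕ) < b) := by omega
      have h2 : (max a b - 1 : ℕ) < a := by omega
      rw [if_neg h1, if_pos h2] at this; norm_num at this
  · intro δ hδ
    have hδa : |δ| ≤ lam y a := le_trans hδ (min_le_left _ _)
    have hδb : |δ| ≤ lam y b := le_trans hδ (min_le_right _ _)
    set μδ : ℕ → ℝ := fun s => lam y s + δ * ν s with hμδ
    have hpoint : (fun j => y j + δ * v j) = Yof m μδ := by
      funext j
      have : Yof m μδ j = Yof m (lam y) j + δ * Yof m ν j := by
        simp [Yof, hμδ, Finset.sum_add_distrib, Finset.mul_sum]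
      rw [this, Yof_lam]
    have hμnn : ∀ s, 0 ≤ μδ s := by
      intro s
      by_cases h1 : s = b
      · subst h1
        have hν1 : ν s = 1 := by simp [hν, hab.symm]
        simp only [hμδ, hν1, mul_one]
        have h3 := neg_abs_le δ
        linarith
      · by_cases h2 : s = a
        · subst h2
          have hν1 : ν s = -1 := by simp [hν, h1]
          simp only [hμδ, hν1, mul_neg_one]
          have h3 := le_abs_self δ
          linarith
        · have : ν s = 0 := by simp [hν, h1, h2]
          rw [hμδ]; simp only [this, mul_zero, add_zero]
          exact lam_nonneg h s
    have hμsum : ∑ s ∈ range (m + 1), μδ s = 1 := by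
      simp only [hμδ, hν, Finset.sum_add_distrib, ← Finset.mul_sum, sum_lam,
        Finset.sum_sub_distrib]
      rw [Finset.sum_ite_eq' (range (m + 1)) b fun _ => (1:ℝ),
        Finset.sum_ite_eq' (range (m + 1)) a fun _ => (1:ℝ)]
      simp [Finset.mem_range, Nat.lt_succ_iff, ha, hb]
    have hOK : OK (Yof m μδ) := OK_Yof hμnn hμsum
    rw [hpoint]
    refine ⟨hOK, ?_⟩
    rw [altSum_Yof]
    have hsplit : ∀ s, (if Odd s then μδ s else 0)
        = (if Odd s then lam y s else 0) + δ * (if Odd s then ν s else 0) := by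
      intro s; by_cases hs : Odd s <;> simp [hs, hμδ]
    simp only [hsplit, Finset.sum_add_distrib, ← Finset.mul_sum]
    rw [← altSum_eq]
    congr 1
    have h1 : ∀ s : ℕ, (if Odd s then ν s else 0)
        = (if s = b then (if Odd b then (1:ℝ) else 0) else 0)
          - (if s = a then (if Odd a then (1:ℝ) else 0) else 0) := by
      intro s
      by_cases hsb : s = b
      · subst hsb
        by_cases hs : Odd s <;> simp [hν, hs, hab.symm]
      · by_cases hsa : s = a
        · subst hsa
          by_cases hs : Odd s <;> simp [hν, hs, hsb]
        · by_cases hs : Odd s <;> simp [hν, hs, hsb, hsa]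
    simp only [h1, Finset.sum_sub_distrib]
    rw [Finset.sum_ite_eq' (range (m + 1)) b, Finset.sum_ite_eq' (range (m + 1)) a]
    simp [Finset.mem_range, Nat.lt_succ_iff, ha, hb]


def Cfun {k : ℕ} (t : Fin k → ℝ) (F : Finset (Fin k)) : ℝ :=
  ∑ i ∈ Fᶜ, t i + ∑ i ∈ F, (1 - t i)

lemma Cfun_add {k : ℕ} (t d : Fin k → ℝ) (c : ℝ) (F : Finset (Fin k)) :
    Cfun (fun i => t i + c * d i) F
      = Cfun t F + c * (∑ i ∈ Fᶜ, d i - ∑ i ∈ F, d i) := by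
  have h1 : ∑ i ∈ Fᶜ, (t i + c * d i) = ∑ i ∈ Fᶜ, t i + c * ∑ i ∈ Fᶜ, d i := by
    rw [Finset.sum_add_distrib, Finset.mul_sum]
  have h2 : ∑ i ∈ F, (1 - (t i + c * d i)) = ∑ i ∈ F, (1 - t i) - c * ∑ i ∈ F, d i := by
    rw [Finset.mul_sum, ← Finset.sum_sub_distrib]
    refine Finset.sum_congr rfl fun i _ => by ring
  simp only [Cfun, h1, h2]; ring

def Pset (k : ℕ) (r : Fin k → ℕ) : Set (∀ i, Fin (r i) → ℝ) :=
  {x | (∀ i, OK (x i)) ∧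
    ∀ F : Finset (Fin k), Odd F.card → 1 ≤ Cfun (fun i => altSum (x i)) F}

lemma not_extreme_of_pm {E : Type*} [AddCommGroup E] [Module ℝ E] {s : Set E}
    {x w : E} (h1 : x + w ∈ s) (h2 : x - w ∈ s) (hw : w ≠ 0) :
    x ∉ Set.extremePoints ℝ s := by
  rintro ⟨-, hext⟩
  have hseg : x ∈ openSegment ℝ (x - w) (x + w) :=
    ⟨1/2, 1/2, by norm_num, by norm_num, by norm_num, by module⟩
  have hpair := hext h2 h1 hseg
  apply hw
  have hww : w = x - (x - w) := by abel
  rw [hww, hpair, sub_self]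

set_option maxHeartbeats 1000000 in
lemma glob_not_extreme {k : ℕ} {r : Fin k → ℕ} {x : ∀ i, Fin (r i) → ℝ}
    (hx : x ∈ Pset k r) (v : ∀ i, Fin (r i) → ℝ) (d : Fin k → ℝ) (ε0 : ℝ) (hε0 : 0 < ε0)
    (H1 : ∀ i (δ : ℝ), |δ| ≤ ε0 → OK (fun j => x i j + δ * v i j) ∧
        altSum (fun j => x i j + δ * v i j) = altSum (x i) + δ * d i)
    (htight : ∀ F : Finset (Fin k), Odd F.card → Cfun (fun i => altSum (x i)) F = 1 →
        (∑ i ∈ Fᶜ, d i - ∑ i ∈ F, d i) = 0)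
    (hv : v ≠ 0) :
    x ∉ Set.extremePoints ℝ (Pset k r) := by
  classical
  set f : Fin k → ℝ := fun i => altSum (x i) with hf
  set G : Finset (Finset (Fin k)) := univ.filter (fun F => Odd F.card ∧ Cfun f F ≠ 1)
    with hG
  set cand : Finset ℝ := insert ε0 (G.image fun F =>
    (Cfun f F - 1) / (|∑ i ∈ Fᶜ, d i - ∑ i ∈ F, d i| + 1)) with hcand
  have hne : cand.Nonempty := ⟨ε0, mem_insert_self _ _⟩
  set ε := cand.min' hne with hε
  have hεpos : 0 < ε := by
    rw [hε, Finset.lt_min'_iff]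
    intro y hy
    rcases mem_insert.mp hy with rfl | hy
    · exact hε0
    · obtain ⟨F, hF, rfl⟩ := mem_image.mp hy
      have hodd := (mem_filter.mp hF).2
      have h1 : 1 ≤ Cfun f F := hx.2 F hodd.1
      have h2 : 1 < Cfun f F := lt_of_le_of_ne h1 (Ne.symm hodd.2)
      have h3 : (0:ℝ) < |∑ i ∈ Fᶜ, d i - ∑ i ∈ F, d i| + 1 := by positivity
      exact div_pos (by linarith) h3
  have hεle : ε ≤ ε0 := Finset.min'_le _ _ (mem_insert_self _ _)
  have key : ∀ σ : ℝ, σ = 1 ∨ σ = -1 → (fun i => fun j => x i j + (σ * ε) * v i j) ∈ Pset k r := by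
    intro σ hσ
    have hσabs : |σ * ε| = ε := by
      rcases hσ with rfl | rfl <;> simp [abs_of_pos hεpos]
    have hσε : |σ * ε| ≤ ε0 := by rw [hσabs]; exact hεle
    constructor
    · intro i; exact (H1 i (σ * ε) hσε).1
    · intro F hF
      have halt : (fun i => altSum (fun j => x i j + (σ * ε) * v i j))
          = fun i => f i + (σ * ε) * d i := by
        funext i; exact (H1 i _ hσε).2
      show 1 ≤ Cfun (fun i => altSum (fun j => x i j + (σ * ε) * v i j)) F
      rw [halt, Cfun_add]
      by_cases ht : Cfun f F = 1
      · rw [htight F hF ht, mul_zero, add_zero, ht]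
      · set B := ∑ i ∈ Fᶜ, d i - ∑ i ∈ F, d i with hB
        have h1 : 1 ≤ Cfun f F := hx.2 F hF
        have hlt : 1 < Cfun f F := lt_of_le_of_ne h1 (Ne.symm ht)
        have hεcand : ε ≤ (Cfun f F - 1) / (|B| + 1) := by
          refine Finset.min'_le _ _ (mem_insert_of_mem ?_)
          exact mem_image_of_mem _ (mem_filter.2 ⟨mem_univ F, hF, ht⟩)
        have hden : (0:ℝ) < |B| + 1 := by positivity
        have h4 : ε * (|B| + 1) ≤ Cfun f F - 1 := (le_div_iff₀ hden).mp hεcand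
        have h5 : |σ * ε * B| ≤ Cfun f F - 1 := by
          rw [abs_mul, hσabs]
          nlinarith [abs_nonneg B, hεpos.le]
        have h6 := neg_abs_le (σ * ε * B)
        linarith
  have hplus := key 1 (Or.inl rfl)
  have hminus := key (-1) (Or.inr rfl)
  set w : ∀ i, Fin (r i) → ℝ := fun i => fun j => ε * v i j with hw
  have hxw : x + w = fun i => fun j => x i j + (1 * ε) * v i j := by
    funext i j; simp only [Pi.add_apply, hw]; ring
  have hxw' : x - w = fun i => fun j => x i j + (-1 * ε) * v i j := by
    funext i j; simp only [Pi.sub_apply, hw]; ring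
  refine not_extreme_of_pm (by rw [hxw]; exact hplus) (by rw [hxw']; exact hminus) ?_
  intro hcon
  apply hv
  funext i j
  have := congrFun (congrFun hcon i) j
  simp only [hw, Pi.zero_apply] at this ⊢
  rcases mul_eq_zero.mp this with h | h
  · exact absurd h (ne_of_gt hεpos)
  · exact h


lemma ncard_lt_eq (m s : ℕ) (hs : s ≤ m) :
    ({j : Fin m | (j : ℕ) < s} : Set (Fin m)).ncard = s := by
  classical
  have h1 : ({j : Fin m | (j : ℕ) < s} : Set (Fin m))
      = ↑((Finset.range s).attachFin fun a ha => lt_of_lt_of_le (Finset.mem_range.mp ha) hs) := by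
    ext j
    simp [Finset.mem_attachFin]
  rw [h1, Set.ncard_coe_finset, Finset.card_attachFin, Finset.card_range]

lemma sum_pos_exists {n : ℕ} {g : ℕ → ℝ} (hg : 0 < ∑ s ∈ range n, g s) :
    ∃ s < n, 0 < g s := by
  by_contra hc
  push_neg at hc
  have : ∑ s ∈ range n, g s ≤ 0 :=
    Finset.sum_nonpos fun s hs => hc s (Finset.mem_range.mp hs)
  linarith

/-- From a single staircase atom, the vector is the 0/1 step vector. -/
lemma single_atom {y : Fin m → ℝ} {s : ℕ} (hs : s ≤ m)
    (h1 : lam y s = 1) (h0 : ∀ t, t ≤ m → t ≠ s → lam y t = 0) :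
    (∀ j : Fin m, y j = if (j : ℕ) < s then 1 else 0) ∧
      altSum y = (if Odd s then 1 else 0) := by
  classical
  have hval : ∀ t ∈ range (m + 1), lam y t = if t = s then 1 else 0 := by
    intro t ht
    by_cases hts : t = s
    · simp [hts, h1]
    · simp [hts, h0 t (by simpa [Nat.lt_succ_iff] using Finset.mem_range.mp ht) hts]
  constructor
  · intro j
    have := Yof_lam y j
    rw [← this, Yof]
    rw [Finset.sum_congr rfl fun t ht => hval t (by
      simp only [Finset.mem_Ico] at ht
      simp only [Finset.mem_range]
      omega)]
    rw [Finset.sum_ite_eq' (Finset.Ico ((j : ℕ) + 1) (m + 1)) s fun _ => (1:ℝ)]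
    have : s ∈ Finset.Ico ((j : ℕ) + 1) (m + 1) ↔ (j : ℕ) < s := by
      simp only [Finset.mem_Ico]; omega
    by_cases hj : (j : ℕ) < s <;> simp [this, hj]
  · rw [altSum_eq]
    have : ∀ t ∈ range (m + 1), (if Odd t then lam y t else 0)
        = if t = s then (if Odd s then (1:ℝ) else 0) else 0 := by
      intro t ht
      by_cases hts : t = s
      · subst hts; by_cases hot : Odd t <;> simp [hot, h1]
      · by_cases hot : Odd t <;>
          simp [hot, hts, h0 t (by simpa [Nat.lt_succ_iff] using Finset.mem_range.mp ht) hts]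
    rw [Finset.sum_congr rfl this, Finset.sum_ite_eq' (range (m + 1)) s]
    simp [Nat.lt_succ_iff, hs]

/-- structure of ordered binary vectors -/
lemma binary_struct {y : Fin m → ℝ} (hb : ∀ j, y j = 0 ∨ y j = 1)
    (hm : ∀ j j' : Fin m, j ≤ j' → y j' ≤ y j) :
    ∃ s ≤ m, (∀ j : Fin m, y j = if (j : ℕ) < s then 1 else 0) ∧
      altSum y = (if Odd s then 1 else 0) ∧
      ({j : Fin m | y j = 1} : Set (Fin m)).ncard = s := by
  classical
  have hOK : OK y := ⟨fun j => by rcases hb j with h | h <;> simp [h], hm⟩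
  have hgf : ∀ s, gf y s = 0 ∨ gf y s = 1 := by
    intro s
    rcases s with _ | s
    · right; rfl
    · by_cases h : s < m
      · simpa [gf, h] using hb ⟨s, h⟩
      · left; simp [gf, h]
  have hlam01 : ∀ s, lam y s = 0 ∨ lam y s = 1 := by
    intro s
    have h1 := lam_nonneg hOK s
    rcases hgf s with h2 | h2 <;> rcases hgf (s + 1) with h3 | h3 <;>
      simp [lam, h2, h3] at h1 ⊢ <;> linarith
  obtain ⟨s, hsm, hspos⟩ := sum_pos_exists (n := m + 1) (g := lam y) (by rw [sum_lam]; norm_num)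
  have hs1 : lam y s = 1 := by
    rcases hlam01 s with h | h
    · linarith
    · exact h
  have hsle : s ≤ m := by omega
  have hrest : ∀ t, t ≤ m → t ≠ s → lam y t = 0 := by
    intro t htm hts
    have hsum := sum_lam y
    have hsplit := Finset.add_sum_erase (range (m + 1)) (lam y)
      (Finset.mem_range.mpr (by omega : s < m + 1))
    have hzero : ∑ u ∈ (range (m + 1)).erase s, lam y u = 0 := by
      rw [← hsplit, hs1] at hsum; linarith
    have := (Finset.sum_eq_zero_iff_of_nonneg fun u _ => lam_nonneg hOK u).mp hzero
    exact this t (Finset.mem_erase.mpr ⟨hts, Finset.mem_range.mpr (by omega)⟩)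
  obtain ⟨hstep, halt⟩ := single_atom hsle hs1 hrest
  refine ⟨s, hsle, hstep, halt, ?_⟩
  have : ({j : Fin m | y j = 1} : Set (Fin m)) = {j : Fin m | (j : ℕ) < s} := by
    ext j
    simp only [Set.mem_setOf_eq, hstep j]
    by_cases hj : (j : ℕ) < s <;> simp [hj]
  rw [this, ncard_lt_eq m s hsle]

/-- the two-tight-sets lemma -/
lemma pair_tight {k : ℕ} {f : Fin k → ℝ} (hf : ∀ i, 0 ≤ f i ∧ f i ≤ 1)
    {F F' : Finset (Fin k)} (hFF' : F ≠ F') (hoF : Odd F.card) (hoF' : Odd F'.card)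
    (htF : Cfun f F = 1) (htF' : Cfun f F' = 1) :
    ∀ i, f i ≠ 0 → f i ≠ 1 → ((i ∈ F) ↔ ¬ (i ∈ F')) := by
  classical
  have hsplit : ∀ G G' : Finset (Fin k),
      Cfun f G = ∑ i ∈ (G ∪ G')ᶜ, f i + ∑ i ∈ G' \ G, f i
        + (∑ i ∈ G ∩ G', (1 - f i) + ∑ i ∈ G \ G', (1 - f i)) := by
    intro G G'
    have h1 : Gᶜ = (G ∪ G')ᶜ ∪ (G' \ G) := by
      ext i; simp only [Finset.mem_compl, Finset.mem_union, Finset.mem_sdiff]; tauto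
    have h2 : Disjoint ((G ∪ G')ᶜ) (G' \ G) := by
      rw [Finset.disjoint_left]
      intro i hi hi2
      simp only [Finset.mem_compl, Finset.mem_union] at hi
      simp only [Finset.mem_sdiff] at hi2
      tauto
    have h3 : G = (G ∩ G') ∪ (G \ G') := by
      ext i; simp only [Finset.mem_union, Finset.mem_inter, Finset.mem_sdiff]; tauto
    have h4 : Disjoint (G ∩ G') (G \ G') := by
      rw [Finset.disjoint_left]
      intro i hi hi2
      simp only [Finset.mem_inter] at hi
      simp only [Finset.mem_sdiff] at hi2
      tauto
    rw [Cfun]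
    congr 1
    · rw [h1, Finset.sum_union h2]
    · conv_lhs => rw [h3]
      rw [Finset.sum_union h4]
  have key : Cfun f F + Cfun f F'
      = 2 * (∑ i ∈ (F ∪ F')ᶜ, f i) + 2 * (∑ i ∈ F ∩ F', (1 - f i))
        + ((F \ F').card + (F' \ F).card : ℝ) := by
    rw [hsplit F F', hsplit F' F]
    have e1 : F' ∪ F = F ∪ F' := Finset.union_comm _ _
    have e2 : F' ∩ F = F ∩ F' := Finset.inter_comm _ _
    rw [e1, e2]
    have e3 : ∑ i ∈ F \ F', f i + ∑ i ∈ F \ F', (1 - f i) = ((F \ F').card : ℝ) := by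
      rw [← Finset.sum_add_distrib]
      simp [Finset.sum_const]
    have e4 : ∑ i ∈ F' \ F, f i + ∑ i ∈ F' \ F, (1 - f i) = ((F' \ F).card : ℝ) := by
      rw [← Finset.sum_add_distrib]
      simp [Finset.sum_const]
    linarith
  have hS1 : 0 ≤ ∑ i ∈ (F ∪ F')ᶜ, f i := Finset.sum_nonneg fun i _ => (hf i).1
  have hS2 : 0 ≤ ∑ i ∈ F ∩ F', (1 - f i) := Finset.sum_nonneg fun i _ => by
    have := (hf i).2; linarith
  have hcc : (F \ F').card + (F' \ F).card + 2 * (F ∩ F').card = F.card + F'.card := by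
    have := Finset.card_sdiff_add_card_inter F F'
    have := Finset.card_sdiff_add_card_inter F' F
    rw [Finset.inter_comm F' F] at this
    omega
  have hccne : (F \ F').card + (F' \ F).card ≠ 0 := by
    intro hcc0
    apply hFF'
    have h1 : F \ F' = ∅ := Finset.card_eq_zero.mp (by omega)
    have h2 : F' \ F = ∅ := Finset.card_eq_zero.mp (by omega)
    exact Finset.Subset.antisymm (Finset.sdiff_eq_empty_iff_subset.mp h1)
      (Finset.sdiff_eq_empty_iff_subset.mp h2)
  have hccge : 2 ≤ (F \ F').card + (F' \ F).card := by
    rcases hoF with ⟨u, hu⟩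
    rcases hoF' with ⟨w, hw⟩
    omega
  have hccger : (2:ℝ) ≤ ((F \ F').card + (F' \ F).card : ℝ) := by exact_mod_cast hccge
  have hzero1 : ∑ i ∈ (F ∪ F')ᶜ, f i = 0 := by
    rw [htF, htF'] at key; push_cast at key; linarith
  have hzero2 : ∑ i ∈ F ∩ F', (1 - f i) = 0 := by
    rw [htF, htF'] at key; push_cast at key; linarith
  have hz1 := (Finset.sum_eq_zero_iff_of_nonneg fun i _ => (hf i).1).mp hzero1
  have hnn2 : ∀ i ∈ F ∩ F', 0 ≤ 1 - f i := fun i _ => by have := (hf i).2; linarith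
  have hz2 := (Finset.sum_eq_zero_iff_of_nonneg hnn2).mp hzero2
  intro i hi0 hi1
  have hnotc : i ∉ (F ∪ F')ᶜ := fun hc => hi0 (hz1 i hc)
  have hnoti : i ∉ F ∩ F' := fun hc => hi1 (by have := hz2 i hc; linarith)
  simp only [Finset.mem_compl, Finset.mem_union] at hnotc
  simp only [Finset.mem_inter] at hnoti
  tauto


lemma frac_block {y : Fin m → ℝ} (hOK : OK y) (h0 : 0 < altSum y) (h1 : altSum y < 1) :
    ∃ v : Fin m → ℝ, v ≠ 0 ∧ ∃ ε0 : ℝ, 0 < ε0 ∧ ∀ δ : ℝ, |δ| ≤ ε0 →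
      OK (fun j => y j + δ * v j) ∧ altSum (fun j => y j + δ * v j) = altSum y + δ := by
  classical
  obtain ⟨b, hbm, hbpos⟩ : ∃ b < m + 1, 0 < (if Odd b then lam y b else 0) :=
    sum_pos_exists (by rw [← altSum_eq]; exact h0)
  have hbodd : Odd b := by by_contra hc; simp [hc] at hbpos
  rw [if_pos hbodd] at hbpos
  obtain ⟨a, ham, hapos⟩ : ∃ a < m + 1, 0 < (if Odd a then 0 else lam y a) :=
    sum_pos_exists (by rw [← one_sub_altSum]; linarith)
  have haodd : ¬ Odd a := by by_contra hc; simp [hc] at hapos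
  rw [if_neg haodd] at hapos
  have hab : a ≠ b := fun h => haodd (h ▸ hbodd)
  obtain ⟨v, hv, ε0, hε0, H⟩ := shift_ok hOK (a := a) (b := b) (by omega) (by omega) hab hapos hbpos
  refine ⟨v, hv, ε0, hε0, fun δ hδ => ⟨(H δ hδ).1, ?_⟩⟩
  rw [(H δ hδ).2]; simp [hbodd, haodd]

lemma same_block {y : Fin m → ℝ} (hOK : OK y) (hbin : altSum y = 0 ∨ altSum y = 1)
    {a b : ℕ} (ha : a ≤ m) (hb : b ≤ m) (hab : a ≠ b) (hpa : 0 < lam y a) (hpb : 0 < lam y b) :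
    ∃ v : Fin m → ℝ, v ≠ 0 ∧ ∃ ε0 : ℝ, 0 < ε0 ∧ ∀ δ : ℝ, |δ| ≤ ε0 →
      OK (fun j => y j + δ * v j) ∧ altSum (fun j => y j + δ * v j) = altSum y := by
  classical
  have hpar : Odd a ↔ Odd b := by
    rcases hbin with h | h
    · have hz : ∀ t ∈ range (m+1), (if Odd t then lam y t else 0) = 0 :=
        (Finset.sum_eq_zero_iff_of_nonneg (fun t _ => by
          by_cases ht : Odd t <;> simp [ht, lam_nonneg hOK])).mp (by rw [← altSum_eq, h])
      constructor
      · intro hoa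
        exfalso
        have := hz a (Finset.mem_range.mpr (by omega))
        rw [if_pos hoa] at this; linarith
      · intro hob
        exfalso
        have := hz b (Finset.mem_range.mpr (by omega))
        rw [if_pos hob] at this; linarith
    · have hz : ∀ t ∈ range (m+1), (if Odd t then 0 else lam y t) = 0 :=
        (Finset.sum_eq_zero_iff_of_nonneg (fun t _ => by
          by_cases ht : Odd t <;> simp [ht, lam_nonneg hOK])).mp (by rw [← one_sub_altSum, h]; ring)
      constructor
      · intro hoa
        by_contra hob
        have := hz b (Finset.mem_range.mpr (by omega))
        rw [if_neg hob] at this; linarith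
      · intro hob
        by_contra hoa
        have := hz a (Finset.mem_range.mpr (by omega))
        rw [if_neg hoa] at this; linarith
  obtain ⟨v, hv, ε0, hε0, H⟩ := shift_ok hOK ha hb hab hpa hpb
  refine ⟨v, hv, ε0, hε0, fun δ hδ => ⟨(H δ hδ).1, ?_⟩⟩
  rw [(H δ hδ).2]
  by_cases hoa : Odd a
  · simp [hoa, hpar.mp hoa]
  · have hob : ¬ Odd b := fun h => hoa (hpar.mpr h)
    simp [hoa, hob]

set_option maxHeartbeats 2000000 in
lemma extreme_sub {k : ℕ} {r : Fin k → ℕ} (x : ∀ i, Fin (r i) → ℝ)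
    (hex : x ∈ Set.extremePoints ℝ (Pset k r)) :
    (∀ i j, x i j = 0 ∨ x i j = 1) ∧
      (∀ i, ∀ j j' : Fin (r i), j ≤ j' → x i j' ≤ x i j) ∧
      Even (∑ i, ({j : Fin (r i) | x i j = 1} : Set (Fin (r i))).ncard) := by
  classical
  have hx : x ∈ Pset k r := hex.1
  have hOKx : ∀ i, OK (x i) := hx.1
  set f : Fin k → ℝ := fun i => altSum (x i) with hf
  have hf01 : ∀ i, 0 ≤ f i ∧ f i ≤ 1 := fun i => ⟨altSum_nonneg (hOKx i), altSum_le_one (hOKx i)⟩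
  -- Step 1 : every altSum value is 0 or 1
  have hbin : ∀ i, f i = 0 ∨ f i = 1 := by
    by_contra hc
    push_neg at hc
    obtain ⟨p, hp0, hp1⟩ := hc
    have hpfrac : 0 < f p ∧ f p < 1 :=
      ⟨lt_of_le_of_ne (hf01 p).1 (Ne.symm hp0), lt_of_le_of_ne (hf01 p).2 hp1⟩
    obtain ⟨vp, hvp, εp, hεp, Hp⟩ := frac_block (hOKx p) hpfrac.1 hpfrac.2
    by_cases htight : ∀ F : Finset (Fin k), Odd F.card → Cfun f F ≠ 1
    · -- no tight constraint: perturb coordinate p alone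
      set d : Fin k → ℝ := fun i => if i = p then 1 else 0 with hd
      set v : ∀ i, Fin (r i) → ℝ :=
        Function.update (fun i => (0 : Fin (r i) → ℝ)) p vp with hv
      have H1 : ∀ i (δ : ℝ), |δ| ≤ εp → OK (fun j => x i j + δ * v i j) ∧
          altSum (fun j => x i j + δ * v i j) = altSum (x i) + δ * d i := by
        intro i δ hδ
        by_cases hip : i = p
        · subst hip
          simp only [hv, Function.update_self]
          exact ⟨(Hp δ hδ).1, by rw [(Hp δ hδ).2, hd]; simp⟩
        · have heq : (fun j => x i j + δ * v i j) = x i := by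
            funext j; simp [hv, Function.update_of_ne hip]
          rw [heq]
          exact ⟨hOKx i, by simp [hd, hip]⟩
      have hvne : v ≠ 0 := by
        intro h0
        apply hvp
        have h1 := congrFun h0 p
        simpa [hv] using h1
      exact (glob_not_extreme hx v d εp hεp H1
        (fun F hF hC => absurd hC (htight F hF)) hvne) hex
    · push_neg at htight
      obtain ⟨F0, hoF0, htF0⟩ := htight
      by_cases hq : ∃ q, q ≠ p ∧ f q ≠ 0 ∧ f q ≠ 1
      · -- two fractional coordinates
        obtain ⟨q, hqp, hq0, hq1⟩ := hq
        have hqfrac : 0 < f q ∧ f q < 1 :=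
          ⟨lt_of_le_of_ne (hf01 q).1 (Ne.symm hq0), lt_of_le_of_ne (hf01 q).2 hq1⟩
        obtain ⟨vq, hvq, εq, hεq, Hq⟩ := frac_block (hOKx q) hqfrac.1 hqfrac.2
        set σ : ℝ := if (p ∈ F0 ↔ q ∈ F0) then -1 else 1 with hσ
        have hσ1 : σ = 1 ∨ σ = -1 := by
          by_cases h : (p ∈ F0 ↔ q ∈ F0) <;> simp [hσ, h]
        have hσabs : ∀ δ : ℝ, |δ * σ| = |δ| := by
          intro δ; rw [abs_mul]; rcases hσ1 with h | h <;> simp [h]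
        set d : Fin k → ℝ := fun i => if i = p then 1 else if i = q then σ else 0 with hd
        set v : ∀ i, Fin (r i) → ℝ :=
          Function.update (Function.update (fun i => (0 : Fin (r i) → ℝ)) p vp) q
            (fun j => σ * vq j) with hv
        have hpq : p ≠ q := fun h => hqp h.symm
        have H1 : ∀ i (δ : ℝ), |δ| ≤ min εp εq → OK (fun j => x i j + δ * v i j) ∧
            altSum (fun j => x i j + δ * v i j) = altSum (x i) + δ * d i := by
          intro i δ hδ
          by_cases hip : i = p
          · subst hip
            have hvi : v i = vp := by
              rw [hv, Function.update_of_ne hpq, Function.update_self]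
            simp only [hvi]
            have hδp : |δ| ≤ εp := le_trans hδ (min_le_left _ _)
            exact ⟨(Hp δ hδp).1, by rw [(Hp δ hδp).2, hd]; simp⟩
          · by_cases hiq : i = q
            · subst hiq
              have hvi : v i = fun j => σ * vq j := by rw [hv, Function.update_self]
              have heq : (fun j => x i j + δ * v i j)
                  = fun j => x i j + (δ * σ) * vq j := by
                funext j; rw [hvi]; ring
              rw [heq]
              have hδσ : |δ * σ| ≤ εq := by
                rw [hσabs]; exact le_trans hδ (min_le_right _ _)
              refine ⟨(Hq (δ * σ) hδσ).1, ?_⟩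
              rw [(Hq (δ * σ) hδσ).2, hd]
              simp [hip]
            · have heq : (fun j => x i j + δ * v i j) = x i := by
                funext j
                simp [hv, Function.update_of_ne hip, Function.update_of_ne hiq]
              rw [heq]
              exact ⟨hOKx i, by simp [hd, hip, hiq]⟩
        have hvne : v ≠ 0 := by
          intro h0
          apply hvp
          have h1 := congrFun h0 p
          rw [hv] at h1
          rw [Function.update_of_ne hpq, Function.update_self] at h1
          simpa using h1
        have htight' : ∀ F : Finset (Fin k), Odd F.card →
            Cfun (fun i => altSum (x i)) F = 1 →
            (∑ i ∈ Fᶜ, d i - ∑ i ∈ F, d i) = 0 := by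
          intro F hoF htF
          have hdsum : ∀ S : Finset (Fin k), ∑ i ∈ S, d i
              = (if p ∈ S then (1:ℝ) else 0) + (if q ∈ S then σ else 0) := by
            intro S
            have hpt : ∀ i, d i
                = (if i = p then (1:ℝ) else 0) + (if i = q then σ else 0) := by
              intro i
              by_cases h1 : i = p
              · subst h1; simp [hd, hpq]
              · by_cases h2 : i = q <;> simp [hd, h1, h2, hqp]
            rw [Finset.sum_congr rfl fun i _ => hpt i, Finset.sum_add_distrib,
              Finset.sum_ite_eq' S p, Finset.sum_ite_eq' S q]
          have hmem : (p ∈ F ↔ q ∈ F) ↔ (p ∈ F0 ↔ q ∈ F0) := by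
            by_cases hFF0 : F = F0
            · rw [hFF0]
            · have h1 := pair_tight hf01 hFF0 hoF hoF0 htF htF0 p hp0 hp1
              have h2 := pair_tight hf01 hFF0 hoF hoF0 htF htF0 q hq0 hq1
              tauto
          rw [hdsum, hdsum]
          by_cases hpF : p ∈ F <;> by_cases hqF : q ∈ F
          · have hiff : p ∈ F0 ↔ q ∈ F0 := hmem.mp (iff_of_true hpF hqF)
            have : σ = -1 := by rw [hσ, if_pos hiff]
            simp [hpF, hqF, this]
          · have hiff : ¬ (p ∈ F0 ↔ q ∈ F0) := fun h =>
              hqF ((hmem.mpr h).mp hpF)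
            have : σ = 1 := by rw [hσ, if_neg hiff]
            simp [hpF, hqF, this]
          · have hiff : ¬ (p ∈ F0 ↔ q ∈ F0) := fun h =>
              hpF ((hmem.mpr h).mpr hqF)
            have : σ = 1 := by rw [hσ, if_neg hiff]
            simp [hpF, hqF, this]
          · have hiff : p ∈ F0 ↔ q ∈ F0 := hmem.mp (iff_of_false hpF hqF)
            have : σ = -1 := by rw [hσ, if_pos hiff]
            simp [hpF, hqF, this]
        exact (glob_not_extreme hx v d (min εp εq) (lt_min hεp hεq) H1 htight' hvne) hex
      · -- p is the unique fractional coordinate : integrality contradiction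
        push_neg at hq
        set term : Fin k → ℝ := fun i => if i ∈ F0 then 1 - f i else f i with hterm
        have hsum : ∑ i, term i = 1 := by
          rw [← htF0, Cfun, ← Finset.sum_compl_add_sum F0 term]
          congr 1
          · refine Finset.sum_congr rfl fun i hi => ?_
            rw [hterm]
            simp [Finset.mem_compl.mp hi]
          · exact Finset.sum_congr rfl fun i hi => by rw [hterm]; simp [hi]
        have htermp : 0 < term p ∧ term p < 1 := by
          rw [hterm]
          by_cases h : p ∈ F0 <;> simp only [h, if_true, if_false] <;>
            exact ⟨by linarith [hpfrac.1, hpfrac.2], by linarith [hpfrac.1, hpfrac.2]⟩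
        have hterm01 : ∀ i, i ≠ p → term i = 0 ∨ term i = 1 := by
          intro i hip
          have hfi : f i = 0 ∨ f i = 1 := by
            by_cases h0 : f i = 0
            · exact Or.inl h0
            · exact Or.inr (hq i hip h0)
          rw [hterm]
          rcases hfi with h | h <;> by_cases hF : i ∈ F0 <;> simp [hF, h]
        have hsplit : term p + ∑ i ∈ Finset.univ.erase p, term i = 1 := by
          rw [Finset.add_sum_erase _ term (Finset.mem_univ p), hsum]
        by_cases hone : ∃ i ∈ Finset.univ.erase p, term i = 1
        · obtain ⟨i0, hi0, hi01⟩ := hone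
          have hnn : ∀ i ∈ Finset.univ.erase p, 0 ≤ term i := fun i hi => by
            rcases hterm01 i (Finset.mem_erase.mp hi).1 with h | h <;> simp [h]
          have h1 : (1:ℝ) ≤ ∑ i ∈ Finset.univ.erase p, term i := by
            calc (1:ℝ) = term i0 := hi01.symm
              _ ≤ _ := Finset.single_le_sum hnn hi0
          linarith [htermp.1]
        · push_neg at hone
          have hzz : ∑ i ∈ Finset.univ.erase p, term i = 0 :=
            Finset.sum_eq_zero fun i hi => by
              rcases hterm01 i (Finset.mem_erase.mp hi).1 with h | h
              · exact h
              · exact absurd h (hone i hi)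
          rw [hzz, add_zero] at hsplit
          linarith [htermp.2]
  -- Step 2 : each block is a step vector
  have hstruct : ∀ i, ∃ s, s ≤ r i ∧ (∀ j, x i j = if (j : ℕ) < s then 1 else 0) ∧
      altSum (x i) = (if Odd s then 1 else 0) := by
    intro i
    have huniq : ∀ a b, a < r i + 1 → b < r i + 1 →
        0 < lam (x i) a → 0 < lam (x i) b → a = b := by
      intro a b ha hb hpa hpb
      by_contra hab
      obtain ⟨vi, hvi, ε0, hε0, H⟩ :=
        same_block (hOKx i) (hbin i) (by omega : a ≤ r i) (by omega : b ≤ r i) hab hpa hpb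
      set v : ∀ i', Fin (r i') → ℝ :=
        Function.update (fun i' => (0 : Fin (r i') → ℝ)) i vi with hv
      have H1 : ∀ i' (δ : ℝ), |δ| ≤ ε0 → OK (fun j => x i' j + δ * v i' j) ∧
          altSum (fun j => x i' j + δ * v i' j)
            = altSum (x i') + δ * (fun _ : Fin k => (0:ℝ)) i' := by
        intro i' δ hδ
        by_cases hii : i' = i
        · subst hii
          simp only [hv, Function.update_self]
          exact ⟨(H δ hδ).1, by rw [(H δ hδ).2]; simp⟩
        · have heq : (fun j => x i' j + δ * v i' j) = x i' := by
            funext j; simp [hv, Function.update_of_ne hii]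
          rw [heq]
          exact ⟨hOKx i', by simp⟩
      have hvne : v ≠ 0 := by
        intro h0
        apply hvi
        have h1 := congrFun h0 i
        simpa [hv] using h1
      exact (glob_not_extreme hx v (fun _ => 0) ε0 hε0 H1 (by intro F _ _; simp) hvne) hex
    obtain ⟨s, hsm, hspos⟩ := sum_pos_exists (n := r i + 1) (g := lam (x i))
      (by rw [sum_lam]; norm_num)
    have hrest : ∀ t, t ≤ r i → t ≠ s → lam (x i) t = 0 := by
      intro t ht hts
      by_contra h
      have hpos : 0 < lam (x i) t := lt_of_le_of_ne (lam_nonneg (hOKx i) t) (Ne.symm h)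
      exact hts (huniq t s (by omega) hsm hpos hspos)
    have hs1 : lam (x i) s = 1 := by
      have hsuml := sum_lam (x i)
      have hsplit := Finset.add_sum_erase (range (r i + 1)) (lam (x i))
        (Finset.mem_range.mpr hsm)
      have hzz : ∑ u ∈ (range (r i + 1)).erase s, lam (x i) u = 0 :=
        Finset.sum_eq_zero fun u hu => by
          obtain ⟨hus, hum⟩ := Finset.mem_erase.mp hu
          exact hrest u (by simpa [Nat.lt_succ_iff] using Finset.mem_range.mp hum) hus
      rw [← hsplit, hzz] at hsuml
      linarith
    obtain ⟨hstep, halt⟩ := single_atom (by omega : s ≤ r i) hs1 hrest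
    exact ⟨s, by omega, hstep, halt⟩
  choose s hsle hstep halt using hstruct
  refine ⟨?_, fun i => (hOKx i).2, ?_⟩
  · intro i j
    rw [hstep i j]
    by_cases h : ((j : ℕ) < s i) <;> simp [h]
  · have hncard : ∀ i, ({j : Fin (r i) | x i j = 1} : Set (Fin (r i))).ncard = s i := by
      intro i
      have hseteq : ({j : Fin (r i) | x i j = 1} : Set _) = {j : Fin (r i) | (j:ℕ) < s i} := by
        ext j
        simp only [Set.mem_setOf_eq, hstep i j]
        by_cases h : ((j : ℕ) < s i) <;> simp [h]
      rw [hseteq, ncard_lt_eq _ _ (hsle i)]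
    rw [show (∑ i, ({j : Fin (r i) | x i j = 1} : Set (Fin (r i))).ncard) = ∑ i, s i from
      Finset.sum_congr rfl fun i _ => hncard i]
    rw [Finset.even_sum_iff_even_card_odd]
    by_contra hodd
    rw [Nat.not_even_iff_odd] at hodd
    have hineq : (1:ℝ) ≤ Cfun f (Finset.univ.filter fun i => Odd (s i)) :=
      hx.2 (Finset.univ.filter fun i => Odd (s i)) hodd
    have hzero : Cfun f (Finset.univ.filter fun i => Odd (s i)) = 0 := by
      rw [Cfun]
      have h1 : ∑ i ∈ (Finset.univ.filter fun i => Odd (s i))ᶜ, f i = 0 :=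
        Finset.sum_eq_zero fun i hi => by
          have hno : ¬ Odd (s i) := by simpa using Finset.mem_compl.mp hi
          simp [hf, halt i, hno]
      have h2 : ∑ i ∈ (Finset.univ.filter fun i => Odd (s i)), (1 - f i) = 0 :=
        Finset.sum_eq_zero fun i hi => by
          have hyes : Odd (s i) := by simpa using hi
          simp [hf, halt i, hyes]
      rw [h1, h2, add_zero]
    rw [hzero] at hineq
    linarith


def Vset (k : ℕ) (r : Fin k → ℕ) : Set (∀ i, Fin (r i) → ℝ) :=
  {x | (∀ i j, x i j = 0 ∨ x i j = 1) ∧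
    (∀ i, ∀ j j' : Fin (r i), j ≤ j' → x i j' ≤ x i j) ∧
    Even (∑ i, {j : Fin (r i) | x i j = 1}.ncard)}

lemma vertex_mem (k : ℕ) (r : Fin k → ℕ) : Vset k r ⊆ Pset k r := by
  classical
  rintro x ⟨hb, hm, heven⟩
  have hstr : ∀ i, ∃ s ≤ r i, (∀ j : Fin (r i), x i j = if (j:ℕ) < s then 1 else 0) ∧
      altSum (x i) = (if Odd s then 1 else 0) ∧
      ({j : Fin (r i) | x i j = 1} : Set (Fin (r i))).ncard = s :=
    fun i => binary_struct (hb i) (hm i)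
  choose s hsle hstep halt hncard using hstr
  have hOKx : ∀ i, OK (x i) :=
    fun i => ⟨fun j => by rcases hb i j with h | h <;> simp [h], hm i⟩
  refine ⟨hOKx, ?_⟩
  intro F hF
  have hevens : Even (∑ i, s i) := by
    rw [show (∑ i, s i) = ∑ i, ({j : Fin (r i) | x i j = 1} : Set (Fin (r i))).ncard from
      Finset.sum_congr rfl fun i _ => (hncard i).symm]
    exact heven
  rw [Finset.even_sum_iff_even_card_odd] at hevens
  show (1:ℝ) ≤ Cfun (fun i => altSum (x i)) F
  by_cases hone : (∃ i ∈ Fᶜ, altSum (x i) = 1) ∨ (∃ i ∈ F, altSum (x i) = 0)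
  · have hnn1 : ∀ i ∈ Fᶜ, (0:ℝ) ≤ altSum (x i) := fun i _ => altSum_nonneg (hOKx i)
    have hnn2 : ∀ i ∈ F, (0:ℝ) ≤ 1 - altSum (x i) := fun i _ => by
      linarith [altSum_le_one (hOKx i)]
    rcases hone with ⟨i0, hi0, h1⟩ | ⟨i0, hi0, h1⟩
    · have hle := Finset.single_le_sum hnn1 hi0
      rw [h1] at hle
      have h2 : (0:ℝ) ≤ ∑ i ∈ F, (1 - altSum (x i)) := Finset.sum_nonneg hnn2
      rw [Cfun]; linarith
    · have hle := Finset.single_le_sum hnn2 hi0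
      rw [h1, sub_zero] at hle
      have h2 : (0:ℝ) ≤ ∑ i ∈ Fᶜ, altSum (x i) := Finset.sum_nonneg hnn1
      rw [Cfun]; linarith
  · push_neg at hone
    obtain ⟨h1, h2⟩ := hone
    exfalso
    have hFeq : F = Finset.univ.filter fun i => Odd (s i) := by
      ext i
      simp only [Finset.mem_filter, Finset.mem_univ, true_and]
      constructor
      · intro hiF
        by_contra ho
        exact h2 i hiF (by rw [halt i, if_neg ho])
      · intro ho
        by_contra hiF
        exact h1 i (Finset.mem_compl.mpr hiF) (by rw [halt i, if_pos ho])
    rw [← hFeq] at hevens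
    exact (Nat.not_odd_iff_even.mpr hevens) hF

lemma altSum_comb {m : ℕ} (y1 y2 : Fin m → ℝ) (a b : ℝ) :
    altSum (fun j => a * y1 j + b * y2 j) = a * altSum y1 + b * altSum y2 := by
  simp only [altSum, Finset.mul_sum, ← Finset.sum_add_distrib]
  exact Finset.sum_congr rfl fun j _ => by ring

lemma Cfun_comb {k : ℕ} (t u : Fin k → ℝ) {a b : ℝ} (hab : a + b = 1) (F : Finset (Fin k)) :
    Cfun (fun i => a * t i + b * u i) F = a * Cfun t F + b * Cfun u F := by
  have h2 : ∑ i ∈ F, (1 - (a * t i + b * u i))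
      = ∑ i ∈ F, (a * (1 - t i) + b * (1 - u i)) :=
    Finset.sum_congr rfl fun i _ => by
      have he : a * (1 - t i) + b * (1 - u i) = (a + b) - (a * t i + b * u i) := by ring
      rw [he, hab]
  simp only [Cfun, h2, Finset.sum_add_distrib, ← Finset.mul_sum]
  ring

lemma convex_Pset (k : ℕ) (r : Fin k → ℕ) : Convex ℝ (Pset k r) := by
  intro x hx y hy a b ha hb hab
  have hcomb : ∀ (i : Fin k) (j : Fin (r i)), (a • x + b • y) i j = a * x i j + b * y i j := by
    intro i j; simp
  constructor
  · intro i
    constructor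
    · intro j
      rw [hcomb]
      have h1 := (hx.1 i).1 j
      have h2 := (hy.1 i).1 j
      constructor
      · exact add_nonneg (mul_nonneg ha h1.1) (mul_nonneg hb h2.1)
      · have e1 : a * x i j ≤ a * 1 := mul_le_mul_of_nonneg_left h1.2 ha
        have e2 : b * y i j ≤ b * 1 := mul_le_mul_of_nonneg_left h2.2 hb
        have : a * x i j + b * y i j ≤ a + b := by linarith
        linarith
    · intro j j' hjj'
      rw [hcomb, hcomb]
      have h1 := mul_le_mul_of_nonneg_left ((hx.1 i).2 j j' hjj') ha
      have h2 := mul_le_mul_of_nonneg_left ((hy.1 i).2 j j' hjj') hb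
      linarith
  · intro F hF
    have hAlt : ∀ i, altSum ((a • x + b • y) i) = a * altSum (x i) + b * altSum (y i) := by
      intro i
      have heq : (a • x + b • y) i = fun j => a * x i j + b * y i j := by
        funext j; exact hcomb i j
      rw [heq, altSum_comb]
    show (1:ℝ) ≤ Cfun (fun i => altSum ((a • x + b • y) i)) F
    have hrw : (fun i => altSum ((a • x + b • y) i))
        = fun i => a * altSum (x i) + b * altSum (y i) := funext hAlt
    rw [hrw, Cfun_comb _ _ hab]
    have e1 : a * 1 ≤ a * Cfun (fun i => altSum (x i)) F :=
      mul_le_mul_of_nonneg_left (hx.2 F hF) ha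
    have e2 : b * 1 ≤ b * Cfun (fun i => altSum (y i)) F :=
      mul_le_mul_of_nonneg_left (hy.2 F hF) hb
    linarith

lemma isClosed_Pset (k : ℕ) (r : Fin k → ℕ) : IsClosed (Pset k r) := by
  have hc1 : ∀ (i : Fin k) (j : Fin (r i)), Continuous fun x : ∀ i, Fin (r i) → ℝ => x i j :=
    fun i j => (continuous_apply j).comp (continuous_apply i)
  have hcalt : ∀ i : Fin k, Continuous fun x : ∀ i, Fin (r i) → ℝ => altSum (x i) := by
    intro i
    have heq : (fun x : ∀ i, Fin (r i) → ℝ => altSum (x i))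
        = fun x => ∑ j : Fin (r i), (-1:ℝ) ^ (j:ℕ) * x i j := rfl
    rw [heq]
    exact continuous_finset_sum _ fun j _ => continuous_const.mul (hc1 i j)
  have hdecomp : Pset k r =
      (⋂ (i : Fin k) (j : Fin (r i)),
          ({x : ∀ i, Fin (r i) → ℝ | 0 ≤ x i j} ∩ {x | x i j ≤ 1})) ∩
      ((⋂ (i : Fin k) (j : Fin (r i)) (j' : Fin (r i)) (_ : j ≤ j'),
          {x : ∀ i, Fin (r i) → ℝ | x i j' ≤ x i j}) ∩
       (⋂ (F : Finset (Fin k)) (_ : Odd F.card),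
          {x : ∀ i, Fin (r i) → ℝ | 1 ≤ Cfun (fun i => altSum (x i)) F})) := by
    ext x
    simp only [Pset, OK, Set.mem_inter_iff, Set.mem_iInter, Set.mem_setOf_eq]
    constructor
    · rintro ⟨h1, h2⟩
      exact ⟨fun i j => ⟨(h1 i).1 j |>.1, (h1 i).1 j |>.2⟩,
        fun i j j' hj => (h1 i).2 j j' hj, fun F hF => h2 F hF⟩
    · rintro ⟨h1, h2, h3⟩
      exact ⟨fun i => ⟨fun j => ⟨(h1 i j).1, (h1 i j).2⟩, fun j j' hj => h2 i j j' hj⟩,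
        fun F hF => h3 F hF⟩
  rw [hdecomp]
  refine IsClosed.inter ?_ (IsClosed.inter ?_ ?_)
  · exact isClosed_iInter fun i => isClosed_iInter fun j =>
      IsClosed.inter (isClosed_le continuous_const (hc1 i j))
        (isClosed_le (hc1 i j) continuous_const)
  · exact isClosed_iInter fun i => isClosed_iInter fun j => isClosed_iInter fun j' =>
      isClosed_iInter fun _ => isClosed_le (hc1 i j') (hc1 i j)
  · refine isClosed_iInter fun F => isClosed_iInter fun _ =>
      isClosed_le continuous_const ?_
    exact Continuous.add (continuous_finset_sum _ fun i _ => hcalt i)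
      (continuous_finset_sum _ fun i _ => continuous_const.sub (hcalt i))

lemma isCompact_Pset (k : ℕ) (r : Fin k → ℕ) : IsCompact (Pset k r) := by
  have hK : IsCompact (Set.pi Set.univ fun i : Fin k =>
      Set.pi Set.univ fun _ : Fin (r i) => Set.Icc (0:ℝ) 1) :=
    isCompact_univ_pi fun i => isCompact_univ_pi fun _ => isCompact_Icc
  refine hK.of_isClosed_subset (isClosed_Pset k r) ?_
  intro x hx
  intro i _
  intro j _
  exact ⟨(hx.1 i).1 j |>.1, (hx.1 i).1 j |>.2⟩

lemma finite_Vset (k : ℕ) (r : Fin k → ℕ) : (Vset k r).Finite := by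
  have hsub : Vset k r ⊆ Set.pi Set.univ fun i : Fin k =>
      Set.pi Set.univ fun _ : Fin (r i) => ({0, 1} : Set ℝ) := by
    rintro x ⟨hb, -, -⟩
    intro i _
    intro j _
    rcases hb i j with h | h <;> simp [h]
  exact Set.Finite.subset
    (Set.Finite.pi fun i => Set.Finite.pi fun _ => (Set.finite_singleton (1:ℝ)).insert 0) hsub

end Stmt7

/-- outer description of the ordered even parity polytope. -/
theorem stmt7 (k : ℕ) (r : Fin k → ℕ) :
    convexHull ℝ
      {x : ∀ i, Fin (r i) → ℝ |
        (∀ i j, x i j = 0 ∨ x i j = 1) ∧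
        (∀ i, ∀ j j' : Fin (r i), j ≤ j' → x i j' ≤ x i j) ∧
        Even (∑ i, {j : Fin (r i) | x i j = 1}.ncard)} =
      {x : ∀ i, Fin (r i) → ℝ |
        (∀ i, (∀ j, 0 ≤ x i j ∧ x i j ≤ 1) ∧
          ∀ j j' : Fin (r i), j ≤ j' → x i j' ≤ x i j) ∧
        ∀ F : Finset (Fin k), Odd F.card →
          1 ≤ ∑ i ∈ Fᶜ, altSum (x i) + ∑ i ∈ F, (1 - altSum (x i))} := by
  classical
  have hVP : {x : ∀ i, Fin (r i) → ℝ |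
      (∀ i j, x i j = 0 ∨ x i j = 1) ∧
      (∀ i, ∀ j j' : Fin (r i), j ≤ j' → x i j' ≤ x i j) ∧
      Even (∑ i, {j : Fin (r i) | x i j = 1}.ncard)} = Stmt7.Vset k r := rfl
  have hPP : {x : ∀ i, Fin (r i) → ℝ |
      (∀ i, (∀ j, 0 ≤ x i j ∧ x i j ≤ 1) ∧
        ∀ j j' : Fin (r i), j ≤ j' → x i j' ≤ x i j) ∧
      ∀ F : Finset (Fin k), Odd F.card →
        1 ≤ ∑ i ∈ Fᶜ, altSum (x i) + ∑ i ∈ F, (1 - altSum (x i))} = Stmt7.Pset k r := rfl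
  rw [hVP, hPP]
  apply Set.Subset.antisymm
  · exact convexHull_min (Stmt7.vertex_mem k r) (Stmt7.convex_Pset k r)
  · have hKM := closure_convexHull_extremePoints (Stmt7.isCompact_Pset k r)
      (Stmt7.convex_Pset k r)
    calc Stmt7.Pset k r
        = closure (convexHull ℝ (Set.extremePoints ℝ (Stmt7.Pset k r))) := hKM.symm
      _ ⊆ closure (convexHull ℝ (Stmt7.Vset k r)) := by
          apply closure_mono
          apply convexHull_mono
          intro x hx
          exact Stmt7.extreme_sub x hx
      _ = convexHull ℝ (Stmt7.Vset k r) :=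
          ((Stmt7.finite_Vset k r).isClosed_convexHull (𝕜 := ℝ)).closure_eq
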